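/- Let L² := L²([0,∞); ℝⁿ). Suppose (i) H₁, H₂ : L² → L² have finite gain with zero offset and are causal; (ii) the feedback interconnection [H₁, τH₂] is well-posed and causal on the extended space L₂e for all τ ∈ (0, 1]; and (iii) H₁ and H₂ have strictly separated SRGs, i.e. there exists r_min > 0 with dist(SRG(H₁)⁻¹, −τ·chord(SRG(H₂))) ≥ r_min for all τ ∈ (0, 1]. Then [H₁, H₂] maps all of L² to L² and has finite incremental gain. -/

import Mathlib

/-!
**Statement 13** (Non-incremental homotopy via SRG separation).  Same setting as the
non-incremental homotopy theorem: signals are functions `ℝ → ℝⁿ` with the measure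
`μ₀ = Lebesgue restricted to [0, ∞)`; `H₁, H₂` are causal operators on `L²` with finite
gain with zero offset; the closed loop `[H₁, τH₂]` is well-posed and causal on the
extended space for all `τ ∈ (0, 1]` (with `H₁e, H₂e` the causal extensions of
`H₁, H₂`); and `H₁, H₂` have strictly separated SRGs with margin `r_min > 0`:
`dist(SRG(H₁)⁻¹, -τ·chord(SRG(H₂))) ≥ r_min` for all `τ ∈ (0, 1]`.  Then `[H₁, H₂]`
maps all of `L²` to `L²` and has finite incremental gain.

The separation hypothesis is expressed pointwise; a point `z = 0` of `SRG(H₁)` inverts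
to `∞`, at infinite distance from every finite point, hence the guard `z ≠ 0`.
-/

open MeasureTheory

noncomputable section

variable {n : ℕ}

/-- `ℝⁿ`. -/
abbrev En (n : ℕ) := EuclideanSpace ℝ (Fin n)

/-- Lebesgue measure restricted to `[0, ∞)`. -/
def mu0 : Measure ℝ := volume.restrict (Set.Ici 0)

/-- Truncation `P_T`: sets a signal to zero on `[T, ∞)`. -/
def trunc (T : ℝ) (u : ℝ → En n) : ℝ → En n := Set.indicator (Set.Iio T) u

/-- `L²` membership. -/
def InL2 (u : ℝ → En n) : Prop := MemLp u 2 mu0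

/-- Extended-space membership: every truncation is in `L²`. -/
def InL2e (u : ℝ → En n) : Prop := ∀ T > 0, InL2 (trunc T u)

/-- The `L²` norm of a signal (as a real number). -/
def nrm (u : ℝ → En n) : ℝ := (eLpNorm u 2 mu0).toReal

/-- The `L²` inner product of two signals. -/
def ip (u v : ℝ → En n) : ℝ := ∫ t, inner ℝ (u t) (v t) ∂mu0

/-- The angle between two signals. -/
def ang (u v : ℝ → En n) : ℝ := Real.arccos (ip u v / (nrm u * nrm v))

/-- The Scaled Relative Graph of an operator on `L²`. -/
def srgOp (F : (ℝ → En n) → (ℝ → En n)) : Set ℂ :=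
  {w | ∃ u₁ u₂, InL2 u₁ ∧ InL2 u₂ ∧ ¬ u₁ =ᵐ[mu0] u₂ ∧
    (w = (nrm (F u₁ - F u₂) / nrm (u₁ - u₂) : ℝ) *
        Complex.exp (Complex.I * (ang (u₁ - u₂) (F u₁ - F u₂) : ℝ)) ∨
     w = (nrm (F u₁ - F u₂) / nrm (u₁ - u₂) : ℝ) *
        Complex.exp (-(Complex.I * (ang (u₁ - u₂) (F u₁ - F u₂) : ℝ))))}

/-- The chord property for a set of complex numbers. -/
def ChordProperty (G : Set ℂ) : Prop :=
  ∀ z ∈ G, ∀ l ∈ Set.Icc (0 : ℝ) 1,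
    (l : ℂ) * z + (1 - (l : ℂ)) * (starRingEnd ℂ) z ∈ G

/-- The chord-property closure: the smallest superset with the chord property. -/
def chordClosure (G : Set ℂ) : Set ℂ := ⋂₀ {S | G ⊆ S ∧ ChordProperty S}

/-- Membership in the feedback relation `[H₁, τH₂]` on `L² × L²`. -/
def FbMem (H₁ H₂ : (ℝ → En n) → (ℝ → En n)) (τ : ℝ) (u y : ℝ → En n) : Prop :=
  InL2 u ∧ InL2 y ∧ ∃ e, InL2 e ∧ e =ᵐ[mu0] u - τ • H₂ y ∧ y =ᵐ[mu0] H₁ e ∧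
    ∀ e', InL2 e' → e' =ᵐ[mu0] u - τ • H₂ y → y =ᵐ[mu0] H₁ e' → e' =ᵐ[mu0] e


namespace SRGaux


lemma nrm_nonneg (f : ℝ → En n) : 0 ≤ nrm f := ENNReal.toReal_nonneg

lemma nrm_congr {f g : ℝ → En n} (h : f =ᵐ[mu0] g) : nrm f = nrm g := by
  unfold nrm; rw [eLpNorm_congr_ae h]

lemma ip_congr {f g f' g' : ℝ → En n} (hf : f =ᵐ[mu0] f') (hg : g =ᵐ[mu0] g') :
    ip f g = ip f' g' := by
  unfold ip
  refine integral_congr_ae ?_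
  filter_upwards [hf, hg] with t h1 h2
  rw [h1, h2]

lemma nrm_toLp {f : ℝ → En n} (hf : InL2 f) : nrm f = ‖MemLp.toLp f hf‖ := by
  rw [Lp.norm_def]
  exact (congrArg ENNReal.toReal (eLpNorm_congr_ae hf.coeFn_toLp)).symm

lemma ip_toLp {f g : ℝ → En n} (hf : InL2 f) (hg : InL2 g) :
    ip f g = (inner ℝ (MemLp.toLp f hf) (MemLp.toLp g hg) : ℝ) := by
  rw [L2.inner_def]
  refine (integral_congr_ae ?_).symm
  filter_upwards [hf.coeFn_toLp, hg.coeFn_toLp] with t h1 h2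
  rw [h1, h2]

lemma nrm_zero_ae {f : ℝ → En n} (h : f =ᵐ[mu0] 0) : nrm f = 0 := by
  rw [nrm_congr h]
  simp [nrm]

lemma toLp_eq_zero_iff {f : ℝ → En n} (hf : InL2 f) :
    MemLp.toLp f hf = 0 ↔ f =ᵐ[mu0] 0 := by
  constructor
  · intro h
    have := hf.coeFn_toLp
    rw [h] at this
    exact this.symm.trans (Lp.coeFn_zero (En n) 2 mu0)
  · intro h
    have : MemLp.toLp f hf = MemLp.toLp (0 : ℝ → En n) (MemLp.zero) :=
      (MemLp.toLp_eq_toLp_iff _ _).2 h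
    simpa [MemLp.toLp_zero] using this

lemma inL2_trunc {f : ℝ → En n} (hf : InL2 f) (T : ℝ) : InL2 (_root_.trunc T f) :=
  hf.indicator measurableSet_Iio

lemma inL2e_of_inL2 {f : ℝ → En n} (hf : InL2 f) : InL2e f := fun T _ => inL2_trunc hf T

lemma trunc_congr {f g : ℝ → En n} (T : ℝ) (h : f =ᵐ[mu0] g) :
    trunc T f =ᵐ[mu0] trunc T g := by
  filter_upwards [h] with t ht
  simp only [trunc, Set.indicator_apply]
  split_ifs <;> simp [ht]

lemma trunc_sub (T : ℝ) (f g : ℝ → En n) :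
    trunc T (f - g) = trunc T f - trunc T g := by
  funext t
  simp only [trunc, Set.indicator_apply, Pi.sub_apply]
  split_ifs <;> simp

lemma trunc_smul (T : ℝ) (c : ℝ) (f : ℝ → En n) :
    trunc T (c • f) = c • trunc T f := by
  funext t
  simp only [trunc, Set.indicator_apply, Pi.smul_apply]
  split_ifs <;> simp

lemma nrm_trunc_le {f : ℝ → En n} (hf : InL2 f) (T : ℝ) : nrm (trunc T f) ≤ nrm f :=
  ENNReal.toReal_mono hf.2.ne (eLpNorm_indicator_le f)

lemma InL2e.sub {f g : ℝ → En n} (hf : InL2e f) (hg : InL2e g) : InL2e (f - g) := by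
  intro T hT
  have : InL2 (trunc T f - trunc T g) := (hf T hT).sub (hg T hT)
  rwa [← trunc_sub] at this

lemma InL2e.smul {f : ℝ → En n} (hf : InL2e f) (c : ℝ) : InL2e (c • f) := by
  intro T hT
  have : InL2 (c • trunc T f) := (hf T hT).const_smul c
  rwa [← trunc_smul] at this

lemma nrm_sub_le {f g : ℝ → En n} (hf : InL2 f) (hg : InL2 g) :
    nrm (f - g) ≤ nrm f + nrm g := by
  rw [nrm_toLp (hf.sub hg), nrm_toLp hf, nrm_toLp hg]
  have : MemLp.toLp (f - g) (hf.sub hg) = MemLp.toLp f hf - MemLp.toLp g hg :=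
    MemLp.toLp_sub hf hg
  rw [this]
  exact norm_sub_le _ _

lemma nrm_smul (c : ℝ) {f : ℝ → En n} (hf : InL2 f) :
    nrm (c • f) = |c| * nrm f := by
  rw [nrm_toLp (hf.const_smul c), nrm_toLp hf]
  have : MemLp.toLp (c • f) (hf.const_smul c) = c • MemLp.toLp f hf := rfl
  rw [this, norm_smul, Real.norm_eq_abs]

lemma nrm_gain {f g : ℝ → En n} (γ : ℝ) (hγ : 0 ≤ γ) (hg : InL2 g)
    (h : eLpNorm f 2 mu0 ≤ ENNReal.ofReal γ * eLpNorm g 2 mu0) :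
    nrm f ≤ γ * nrm g := by
  have hfin : ENNReal.ofReal γ * eLpNorm g 2 mu0 ≠ ⊤ :=
    ENNReal.mul_ne_top ENNReal.ofReal_ne_top hg.2.ne
  have := ENNReal.toReal_mono hfin h
  rwa [ENNReal.toReal_mul, ENNReal.toReal_ofReal hγ] at this

lemma inL2_of_nrm_trunc_le {f : ℝ → En n} (hf : InL2e f) (C : ℝ)
    (hC : ∀ k : ℕ, nrm (trunc ((k : ℝ) + 1) f) ≤ C) : InL2 f := by
  have hmem : ∀ k : ℕ, InL2 (trunc ((k : ℝ) + 1) f) := fun k => hf _ (by positivity)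
  have hsm : AEStronglyMeasurable f mu0 := by
    refine aestronglyMeasurable_of_tendsto_ae Filter.atTop (f := fun k : ℕ => trunc ((k : ℝ) + 1) f)
      (fun k => (hmem k).aestronglyMeasurable) (Filter.Eventually.of_forall fun t => ?_)
    refine Filter.Tendsto.congr' ?_ (tendsto_const_nhds (x := f t))
    refine Filter.eventually_atTop.2 ⟨⌊t⌋₊, fun k hk => ?_⟩
    have ht : t < (k : ℝ) + 1 :=
      lt_of_lt_of_le (Nat.lt_floor_add_one t)
        (by exact_mod_cast add_le_add_left (Nat.cast_le.2 hk) 1)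
    simp [trunc, Set.indicator_of_mem, Set.mem_Iio, ht]
  have hC0 : 0 ≤ C := le_trans (nrm_nonneg _) (hC 0)
  refine ⟨hsm, ?_⟩
  set G : ℝ → ENNReal := fun t => (‖f t‖₊ : ENNReal) ^ (2 : ℝ) with hG
  set F : ℕ → ℝ → ENNReal := fun k t => (‖trunc ((k : ℝ) + 1) f t‖₊ : ENNReal) ^ (2 : ℝ)
    with hF
  have hFle : ∀ k t, F k t ≤ G t := by
    intro k t
    simp only [hF, hG, trunc, Set.indicator_apply]
    split_ifs <;> simp [ENNReal.rpow_le_rpow, ENNReal.coe_le_coe]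
  have hmono : ∀ t, Monotone fun k => F k t := by
    intro t j k hjk
    simp only [hF, trunc, Set.indicator_apply, Set.mem_Iio]
    split_ifs with h1 h2
    · exact le_refl _
    · exact absurd (lt_of_lt_of_le h1 (by exact_mod_cast add_le_add_left (Nat.cast_le.2 hjk) 1)) h2
    · simp
    · simp
  have hsup : ∀ t, (⨆ k, F k t) = G t := by
    intro t
    refine le_antisymm (iSup_le fun k => hFle k t) ?_
    have ht : t < ((⌊t⌋₊ : ℝ)) + 1 := Nat.lt_floor_add_one t
    have : G t = F ⌊t⌋₊ t := by
      simp only [hF, hG, trunc, Set.indicator_apply, Set.mem_Iio, if_pos ht]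
    rw [this]
    exact le_iSup (fun k => F k t) _
  have hFmeas : ∀ k, AEMeasurable (F k) mu0 := by
    intro k
    exact (ENNReal.continuous_rpow_const.measurable).comp_aemeasurable
      ((hmem k).aestronglyMeasurable.enorm)
  have hlint : ∫⁻ t, G t ∂mu0 = ⨆ k, ∫⁻ t, F k t ∂mu0 := by
    rw [← lintegral_iSup' hFmeas (Filter.Eventually.of_forall hmono)]
    exact lintegral_congr fun t => (hsup t).symm
  have hsnorm : ∀ (g : ℝ → En n),
      eLpNorm g 2 mu0 = (∫⁻ t, (‖g t‖₊ : ENNReal) ^ (2 : ℝ) ∂mu0) ^ (1 / (2:ℝ)) := by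
    intro g
    rw [eLpNorm_eq_lintegral_rpow_enorm_toReal (by norm_num) (by norm_num)]
    simp only [ENNReal.toReal_ofNat, enorm_eq_nnnorm]
  have hbk : ∀ k, ∫⁻ t, F k t ∂mu0 ≤ (ENNReal.ofReal C) ^ (2 : ℝ) := by
    intro k
    have h1 : eLpNorm (trunc ((k : ℝ) + 1) f) 2 mu0 ≤ ENNReal.ofReal C := by
      rw [← ENNReal.ofReal_toReal (hmem k).2.ne]
      exact ENNReal.ofReal_le_ofReal (hC k)
    have h2 : (∫⁻ t, F k t ∂mu0) = (eLpNorm (trunc ((k : ℝ) + 1) f) 2 mu0) ^ (2:ℝ) := by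
      simp only [hF]
      rw [hsnorm, ← ENNReal.rpow_mul]
      norm_num
    rw [h2]
    exact ENNReal.rpow_le_rpow h1 (by norm_num)
  have hGfin : ∫⁻ t, G t ∂mu0 < ⊤ := by
    rw [hlint]
    exact lt_of_le_of_lt (iSup_le hbk)
      (ENNReal.rpow_lt_top_of_nonneg (by norm_num) ENNReal.ofReal_ne_top)
  rw [hsnorm f]
  exact ENNReal.rpow_lt_top_of_nonneg (by norm_num) hGfin.ne

end SRGaux

namespace SRGaux2


lemma abs_le_one_of_sq (t : ℝ) (h : t ^ 2 ≤ 1) : |t| ≤ 1 := by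
  rw [← Real.sqrt_one, ← Real.sqrt_sq_eq_abs]
  exact Real.sqrt_le_sqrt h

lemma core_real (a b τ c1 s1 c2 s2 c3 : ℝ) (ha : 0 ≤ a) (hb : 0 ≤ b) (hτ : 0 ≤ τ)
    (h1 : c1 ^ 2 + s1 ^ 2 = 1) (h2 : c2 ^ 2 + s2 ^ 2 = 1)
    (hg : (c3 - c1 * c2) ^ 2 ≤ s1 ^ 2 * s2 ^ 2) :
    ∃ t : ℝ, |t| ≤ 1 ∧
      (a * c1 + τ * b * c2) ^ 2 + (a * s1 + τ * b * (t * s2)) ^ 2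
        ≤ a ^ 2 + τ ^ 2 * b ^ 2 + 2 * τ * (a * b * c3) := by
  by_cases hz : s1 * s2 = 0
  · have h0 : (c3 - c1 * c2) ^ 2 ≤ 0 := by nlinarith [sq_nonneg (s1 * s2)]
    have hc3 : c3 = c1 * c2 := by nlinarith [sq_nonneg (c3 - c1 * c2)]
    refine ⟨0, by norm_num, ?_⟩
    have hkey : (a * c1 + τ * b * c2) ^ 2 + (a * s1 + τ * b * (0 * s2)) ^ 2
        = a ^ 2 * (c1 ^ 2 + s1 ^ 2) + τ ^ 2 * b ^ 2 * c2 ^ 2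
          + 2 * τ * (a * b * (c1 * c2)) := by ring
    rw [hkey, h1, ← hc3]
    nlinarith [sq_nonneg (τ * b), sq_nonneg s2]
  · set t := (c3 - c1 * c2) / (s1 * s2) with hts
    have hs2 : (0:ℝ) < (s1 * s2) ^ 2 := by positivity
    have ht2 : t ^ 2 ≤ 1 := by
      rw [hts, div_pow, div_le_one hs2]
      nlinarith
    refine ⟨t, abs_le_one_of_sq t ht2, ?_⟩
    have htmul : t * (s1 * s2) = c3 - c1 * c2 := div_mul_cancel₀ _ hz
    have hkey : (a * c1 + τ * b * c2) ^ 2 + (a * s1 + τ * b * (t * s2)) ^ 2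
        = a ^ 2 * (c1 ^ 2 + s1 ^ 2) + τ ^ 2 * b ^ 2 * (c2 ^ 2 + t ^ 2 * s2 ^ 2)
          + 2 * τ * (a * b * (c1 * c2 + t * (s1 * s2))) := by ring
    rw [hkey, h1, htmul]
    have hle : c2 ^ 2 + t ^ 2 * s2 ^ 2 ≤ 1 := by nlinarith [sq_nonneg s2]
    nlinarith [sq_nonneg (τ * b), mul_nonneg (mul_nonneg hτ ha) hb]

variable {F : Type*} [NormedAddCommGroup F] [InnerProductSpace ℝ F]

local notation "⟪" x ", " y "⟫" => @inner ℝ _ _ x y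

lemma gram_unit (x y v : F) (hx : ‖x‖ = 1) (hy : ‖y‖ = 1) (hv : ‖v‖ = 1) :
    (⟪x, v⟫ - ⟪x, y⟫ * ⟪y, v⟫) ^ 2 ≤ (1 - ⟪x, y⟫ ^ 2) * (1 - ⟪y, v⟫ ^ 2) := by
  have hcs := real_inner_mul_inner_self_le (x - ⟪x, y⟫ • y) (v - ⟪y, v⟫ • y)
  have hxx : ⟪x, x⟫ = 1 := by rw [real_inner_self_eq_norm_sq, hx]; norm_num
  have hyy : ⟪y, y⟫ = 1 := by rw [real_inner_self_eq_norm_sq, hy]; norm_num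
  have hvv : ⟪v, v⟫ = 1 := by rw [real_inner_self_eq_norm_sq, hv]; norm_num
  have hyx : ⟪y, x⟫ = ⟪x, y⟫ := real_inner_comm x y
  have hvy : ⟪v, y⟫ = ⟪y, v⟫ := real_inner_comm y v
  have hvx : ⟪v, x⟫ = ⟪x, v⟫ := real_inner_comm x v
  simp only [inner_sub_left, inner_sub_right, real_inner_smul_left, real_inner_smul_right,
    hxx, hyy, hvv, hyx, hvy, hvx] at hcs
  nlinarith [hcs]

lemma gram_div (x y v : F) (hx : x ≠ 0) (hy : y ≠ 0) :
    (⟪x, v⟫ / (‖x‖ * ‖v‖) - ⟪x, y⟫ / (‖x‖ * ‖y‖) * (⟪y, v⟫ / (‖y‖ * ‖v‖))) ^ 2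
      ≤ (1 - (⟪x, y⟫ / (‖x‖ * ‖y‖)) ^ 2) * (1 - (⟪y, v⟫ / (‖y‖ * ‖v‖)) ^ 2) := by
  have hxn : (0:ℝ) < ‖x‖ := norm_pos_iff.2 hx
  have hyn : (0:ℝ) < ‖y‖ := norm_pos_iff.2 hy
  by_cases hv : v = 0
  · subst hv
    simp only [inner_zero_right, norm_zero, mul_zero, zero_div, zero_mul, sub_zero]
    have h1 : (⟪x, y⟫ / (‖x‖ * ‖y‖)) ^ 2 ≤ 1 := by
      rw [div_pow, div_le_one (by positivity)]
      nlinarith [abs_real_inner_le_norm x y, abs_nonneg (⟪x, y⟫), sq_abs (⟪x, y⟫)]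
    nlinarith [h1]
  · have hvn : (0:ℝ) < ‖v‖ := norm_pos_iff.2 hv
    have := gram_unit (‖x‖⁻¹ • x) (‖y‖⁻¹ • y) (‖v‖⁻¹ • v)
      (norm_smul_inv_norm hx) (norm_smul_inv_norm hy) (norm_smul_inv_norm hv)
    simp only [real_inner_smul_left, real_inner_smul_right] at this
    have e1 : ‖v‖⁻¹ * (‖x‖⁻¹ * ⟪x, v⟫) = ⟪x, v⟫ / (‖x‖ * ‖v‖) := by
      rw [div_eq_mul_inv, mul_inv]; ring
    have e2 : ‖y‖⁻¹ * (‖x‖⁻¹ * ⟪x, y⟫) = ⟪x, y⟫ / (‖x‖ * ‖y‖) := by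
      rw [div_eq_mul_inv, mul_inv]; ring
    have e3 : ‖v‖⁻¹ * (‖y‖⁻¹ * ⟪y, v⟫) = ⟪y, v⟫ / (‖y‖ * ‖v‖) := by
      rw [div_eq_mul_inv, mul_inv]; ring
    rwa [e1, e2, e3] at this

lemma abs_point (a b τ θ φ l : ℝ) :
    (norm ((a : ℂ) * Complex.exp (Complex.I * (θ : ℂ))
      + (τ : ℂ) * ((l : ℂ) * ((b : ℂ) * Complex.exp (Complex.I * (φ : ℂ)))
        + (1 - (l : ℂ)) * (starRingEnd ℂ) ((b : ℂ) * Complex.exp (Complex.I * (φ : ℂ)))))) ^ 2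
      = (a * Real.cos θ + τ * b * Real.cos φ) ^ 2
        + (a * Real.sin θ + τ * b * ((2 * l - 1) * Real.sin φ)) ^ 2 := by
  rw [mul_comm Complex.I (θ:ℂ), mul_comm Complex.I (φ:ℂ), Complex.exp_mul_I,
    Complex.exp_mul_I, Complex.sq_norm, Complex.normSq_apply]
  simp only [← Complex.ofReal_cos, ← Complex.ofReal_sin, map_add, map_mul, map_sub, map_one,
    Complex.conj_ofReal, Complex.conj_I, Complex.add_re, Complex.add_im, Complex.mul_re,
    Complex.mul_im, Complex.ofReal_re, Complex.ofReal_im, Complex.I_re, Complex.I_im,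
    Complex.sub_re, Complex.sub_im, Complex.one_re, Complex.one_im, Complex.neg_re,
    Complex.neg_im, mul_neg, neg_mul]
  ring

end SRGaux2

namespace SRGaux3
open SRGaux SRGaux2


lemma chord_mem {G : Set ℂ} {w : ℂ} (hw : w ∈ G) {l : ℝ} (hl : l ∈ Set.Icc (0 : ℝ) 1) :
    (l : ℂ) * w + (1 - (l : ℂ)) * (starRingEnd ℂ) w ∈ chordClosure G :=
  fun _ hS => hS.2 w (hS.1 hw) l hl

lemma inner_div_sq_le_one {F : Type*} [NormedAddCommGroup F] [InnerProductSpace ℝ F]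
    (X Y : F) : ((inner ℝ X Y : ℝ) / (‖X‖ * ‖Y‖)) ^ 2 ≤ 1 := by
  by_cases h : ‖X‖ * ‖Y‖ = 0
  · rw [h, div_zero]; norm_num
  · have hpos : 0 < ‖X‖ * ‖Y‖ := lt_of_le_of_ne (by positivity) (Ne.symm h)
    rw [div_pow, div_le_one (by positivity)]
    nlinarith [abs_real_inner_le_norm X Y, sq_abs (inner ℝ X Y : ℝ),
      abs_nonneg (inner ℝ X Y : ℝ)]

lemma div_alg1 (nx ny nv i : ℝ) (hnx : nx ≠ 0) (hny : ny ≠ 0) (h0 : nv = 0 → i = 0) :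
    nx / ny * (nv / ny) * (i / (nx * nv)) = i / ny ^ 2 := by
  by_cases hv : nv = 0
  · rw [hv, h0 hv]; simp
  · field_simp

lemma div_alg2 (ny nv i : ℝ) (hny : ny ≠ 0) (h0 : nv = 0 → i = 0) :
    nv / ny * (i / (ny * nv)) = i / ny ^ 2 := by
  by_cases hv : nv = 0
  · rw [hv, h0 hv]; simp
  · field_simp

lemma div_alg3 (nx ny nv i τ : ℝ) (hny : ny ≠ 0) :
    (nx / ny) ^ 2 + τ ^ 2 * (nv / ny) ^ 2 + 2 * τ * (i / ny ^ 2)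
      = (nx ^ 2 + 2 * τ * i + τ ^ 2 * nv ^ 2) / ny ^ 2 := by
  field_simp
  ring

lemma sub_ae_zero {f g : ℝ → En n} (h : f =ᵐ[mu0] g) : f - g =ᵐ[mu0] 0 := by
  filter_upwards [h] with t ht
  simp [Pi.sub_apply, ht]

lemma ae_of_sub_zero {f g : ℝ → En n} (h : f - g =ᵐ[mu0] 0) : f =ᵐ[mu0] g := by
  filter_upwards [h] with t ht
  have : f t - g t = 0 := ht
  exact sub_eq_zero.1 this

lemma lemS {H₁ H₂ : (ℝ → En n) → (ℝ → En n)}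
    (hmap₂ : ∀ u, InL2 u → InL2 (H₂ u))
    (hae₁ : ∀ u v, InL2 u → InL2 v → u =ᵐ[mu0] v → H₁ u =ᵐ[mu0] H₁ v)
    {rmin : ℝ} (hrmin : 0 < rmin)
    (hsep : ∀ τ ∈ Set.Ioc (0 : ℝ) 1, ∀ z ∈ srgOp H₁, z ≠ 0 →
      ∀ w ∈ chordClosure (srgOp H₂), rmin ≤ norm (z⁻¹ - (-((τ : ℂ) * w))))
    {τ : ℝ} (hτ : τ ∈ Set.Ioc (0 : ℝ) 1)
    {u₁ u₂ e₁ e₂ y₁ y₂ : ℝ → En n}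
    (hu₁ : InL2 u₁) (hu₂ : InL2 u₂) (he₁ : InL2 e₁) (he₂ : InL2 e₂)
    (hy₁ : InL2 y₁) (hy₂ : InL2 y₂)
    (heq₁ : e₁ =ᵐ[mu0] u₁ - τ • H₂ y₁) (hye₁ : y₁ =ᵐ[mu0] H₁ e₁)
    (heq₂ : e₂ =ᵐ[mu0] u₂ - τ • H₂ y₂) (hye₂ : y₂ =ᵐ[mu0] H₁ e₂) :
    nrm (y₁ - y₂) * rmin ≤ nrm (u₁ - u₂) := by
  by_cases hyy : y₁ =ᵐ[mu0] y₂
  · rw [nrm_zero_ae (sub_ae_zero hyy), zero_mul]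
    exact nrm_nonneg _
  · have hee : ¬ e₁ =ᵐ[mu0] e₂ :=
      fun h => hyy (hye₁.trans ((hae₁ e₁ e₂ he₁ he₂ h).trans hye₂.symm))
    have hΔeL : InL2 (e₁ - e₂) := he₁.sub he₂
    have hΔyL : InL2 (y₁ - y₂) := hy₁.sub hy₂
    have hvL : InL2 (H₂ y₁ - H₂ y₂) := (hmap₂ y₁ hy₁).sub (hmap₂ y₂ hy₂)
    have hYae : H₁ e₁ - H₁ e₂ =ᵐ[mu0] y₁ - y₂ := (hye₁.symm).sub (hye₂.symm)
    have hEq : u₁ - u₂ =ᵐ[mu0] (e₁ - e₂) + τ • (H₂ y₁ - H₂ y₂) := by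
      filter_upwards [heq₁, heq₂] with t h1 h2
      have h1' : e₁ t = u₁ t - τ • (H₂ y₁) t := h1
      have h2' : e₂ t = u₂ t - τ • (H₂ y₂) t := h2
      show u₁ t - u₂ t = (e₁ t - e₂ t) + τ • ((H₂ y₁) t - (H₂ y₂) t)
      rw [h1', h2', smul_sub]
      abel
    have hΔy0 : ¬ (y₁ - y₂) =ᵐ[mu0] 0 := fun h => hyy (ae_of_sub_zero h)
    have hΔe0 : ¬ (e₁ - e₂) =ᵐ[mu0] 0 := fun h => hee (ae_of_sub_zero h)
    set X := MemLp.toLp (e₁ - e₂) hΔeL with hX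
    set Y := MemLp.toLp (y₁ - y₂) hΔyL with hY
    set V := MemLp.toLp (H₂ y₁ - H₂ y₂) hvL with hV
    have hX0 : X ≠ 0 := fun h => hΔe0 ((toLp_eq_zero_iff hΔeL).1 h)
    have hY0 : Y ≠ 0 := fun h => hΔy0 ((toLp_eq_zero_iff hΔyL).1 h)
    have hnX : 0 < ‖X‖ := norm_pos_iff.2 hX0
    have hnY : 0 < ‖Y‖ := norm_pos_iff.2 hY0
    set c1 : ℝ := (inner ℝ X Y : ℝ) / (‖X‖ * ‖Y‖) with hc1
    set c2 : ℝ := (inner ℝ Y V : ℝ) / (‖Y‖ * ‖V‖) with hc2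
    set c3 : ℝ := (inner ℝ X V : ℝ) / (‖X‖ * ‖V‖) with hc3
    set s1 : ℝ := Real.sqrt (1 - c1 ^ 2) with hs1
    set s2 : ℝ := Real.sqrt (1 - c2 ^ 2) with hs2
    have hc1sq : c1 ^ 2 ≤ 1 := inner_div_sq_le_one X Y
    have hc2sq : c2 ^ 2 ≤ 1 := inner_div_sq_le_one Y V
    have hc1b := abs_le.1 (abs_le_one_of_sq c1 hc1sq)
    have hc2b := abs_le.1 (abs_le_one_of_sq c2 hc2sq)
    have hs1sq : s1 ^ 2 = 1 - c1 ^ 2 := Real.sq_sqrt (by linarith)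
    have hs2sq : s2 ^ 2 = 1 - c2 ^ 2 := Real.sq_sqrt (by linarith)
    have hgram : (c3 - c1 * c2) ^ 2 ≤ s1 ^ 2 * s2 ^ 2 := by
      rw [hs1sq, hs2sq]
      exact gram_div X Y V hX0 hY0
    set a : ℝ := ‖X‖ / ‖Y‖ with ha
    set b : ℝ := ‖V‖ / ‖Y‖ with hb
    obtain ⟨t, ht1, hineq⟩ := core_real a b τ c1 s1 c2 s2 c3
      (by positivity) (by positivity) hτ.1.le
      (by rw [hs1sq]; ring) (by rw [hs2sq]; ring) hgram
    have htb := abs_le.1 ht1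
    set l : ℝ := (t + 1) / 2 with hl
    have hlmem : l ∈ Set.Icc (0 : ℝ) 1 := ⟨by rw [hl]; linarith, by rw [hl]; linarith⟩
    -- angle and norm rewrites
    have hipz : ip (e₁ - e₂) (H₁ e₁ - H₁ e₂) = (inner ℝ X Y : ℝ) := by
      rw [ip_congr (Filter.EventuallyEq.refl _ _) hYae, ip_toLp hΔeL hΔyL]
    have hnrmz : nrm (H₁ e₁ - H₁ e₂) = ‖Y‖ := by
      rw [nrm_congr hYae, nrm_toLp hΔyL]
    have hnrme : nrm (e₁ - e₂) = ‖X‖ := nrm_toLp hΔeL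
    have hnrmy : nrm (y₁ - y₂) = ‖Y‖ := nrm_toLp hΔyL
    have hnrmv : nrm (H₂ y₁ - H₂ y₂) = ‖V‖ := nrm_toLp hvL
    have hipw : ip (y₁ - y₂) (H₂ y₁ - H₂ y₂) = (inner ℝ Y V : ℝ) := ip_toLp hΔyL hvL
    have hangz : ang (e₁ - e₂) (H₁ e₁ - H₁ e₂) = Real.arccos c1 := by
      unfold ang
      rw [hipz, hnrmz, hnrme]
    have hangw : ang (y₁ - y₂) (H₂ y₁ - H₂ y₂) = Real.arccos c2 := by
      unfold ang
      rw [hipw, hnrmy, hnrmv]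
    -- srg membership
    have hzmem : ((‖Y‖ / ‖X‖ : ℝ) : ℂ)
        * Complex.exp (-(Complex.I * (Real.arccos c1 : ℝ))) ∈ srgOp H₁ := by
      refine ⟨e₁, e₂, he₁, he₂, hee, Or.inr ?_⟩
      rw [hnrmz, hnrme, hangz]
    have hwmem : ((‖V‖ / ‖Y‖ : ℝ) : ℂ)
        * Complex.exp (Complex.I * (Real.arccos c2 : ℝ)) ∈ srgOp H₂ := by
      refine ⟨y₁, y₂, hy₁, hy₂, hyy, Or.inl ?_⟩
      rw [hnrmv, hnrmy, hangw]
    have hzne : ((‖Y‖ / ‖X‖ : ℝ) : ℂ)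
        * Complex.exp (-(Complex.I * (Real.arccos c1 : ℝ))) ≠ 0 := by
      apply mul_ne_zero _ (Complex.exp_ne_zero _)
      exact_mod_cast (div_pos hnY hnX).ne'
    have hw'mem := chord_mem hwmem hlmem
    have hsepa := hsep τ hτ _ hzmem hzne _ hw'mem
    rw [sub_neg_eq_add] at hsepa
    have hzinv : (((‖Y‖ / ‖X‖ : ℝ) : ℂ)
        * Complex.exp (-(Complex.I * (Real.arccos c1 : ℝ))))⁻¹
        = ((a : ℝ) : ℂ) * Complex.exp (Complex.I * (Real.arccos c1 : ℝ)) := by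
      rw [mul_inv, ← Complex.exp_neg, neg_neg, ← Complex.ofReal_inv, inv_div]
    rw [hzinv] at hsepa
    -- evaluate the modulus
    have habs := abs_point a b τ (Real.arccos c1) (Real.arccos c2) l
    rw [Real.cos_arccos hc1b.1 hc1b.2, Real.cos_arccos hc2b.1 hc2b.2,
      Real.sin_arccos, Real.sin_arccos] at habs
    have h2l : 2 * l - 1 = t := by rw [hl]; ring
    rw [h2l] at habs
    -- identify the right-hand side with norms
    have hτpos := hτ.1
    have hV0i : ‖V‖ = 0 → (inner ℝ X V : ℝ) = 0 := by
      intro hV0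
      rw [norm_eq_zero.1 hV0, inner_zero_right]
    have habc3 : a * b * c3 = (inner ℝ X V : ℝ) / ‖Y‖ ^ 2 := by
      rw [ha, hb, hc3]
      exact div_alg1 _ _ _ _ hnX.ne' hnY.ne' hV0i
    have hnormsq : ‖X + τ • V‖ ^ 2 = ‖X‖ ^ 2 + 2 * τ * (inner ℝ X V : ℝ) + τ ^ 2 * ‖V‖ ^ 2 := by
      rw [norm_add_sq_real, real_inner_smul_right, norm_smul, Real.norm_eq_abs,
        abs_of_pos hτpos, mul_pow]
      ring
    have hrhs : a ^ 2 + τ ^ 2 * b ^ 2 + 2 * τ * (a * b * c3)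
        = ‖X + τ • V‖ ^ 2 / ‖Y‖ ^ 2 := by
      rw [habc3, hnormsq, ha, hb]
      exact div_alg3 _ _ _ _ _ hnY.ne'
    -- the input difference
    have hsumLp : MemLp.toLp ((e₁ - e₂) + τ • (H₂ y₁ - H₂ y₂))
        (hΔeL.add (hvL.const_smul τ)) = X + τ • V := by
      rw [MemLp.toLp_add hΔeL (hvL.const_smul τ)]
      rfl
    have hnrmu : nrm (u₁ - u₂) = ‖X + τ • V‖ := by
      rw [nrm_congr hEq, nrm_toLp (hΔeL.add (hvL.const_smul τ)), hsumLp]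
    -- combine
    have hfin : rmin ^ 2 ≤ (nrm (u₁ - u₂)) ^ 2 / ‖Y‖ ^ 2 := by
      calc rmin ^ 2 ≤ (norm (((a : ℝ) : ℂ) * Complex.exp (Complex.I * (Real.arccos c1 : ℝ))
            + (τ : ℂ) * ((l : ℂ) * (((‖V‖ / ‖Y‖ : ℝ) : ℂ)
                * Complex.exp (Complex.I * (Real.arccos c2 : ℝ)))
              + (1 - (l : ℂ)) * (starRingEnd ℂ) (((‖V‖ / ‖Y‖ : ℝ) : ℂ)
                * Complex.exp (Complex.I * (Real.arccos c2 : ℝ)))))) ^ 2 := by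
            apply pow_le_pow_left₀ hrmin.le hsepa
        _ = (a * c1 + τ * b * c2) ^ 2 + (a * s1 + τ * b * (t * s2)) ^ 2 := habs
        _ ≤ a ^ 2 + τ ^ 2 * b ^ 2 + 2 * τ * (a * b * c3) := hineq
        _ = ‖X + τ • V‖ ^ 2 / ‖Y‖ ^ 2 := hrhs
        _ = (nrm (u₁ - u₂)) ^ 2 / ‖Y‖ ^ 2 := by rw [hnrmu]
    have hfin2 : (rmin * ‖Y‖) ^ 2 ≤ (nrm (u₁ - u₂)) ^ 2 := by
      rw [mul_pow]
      have := mul_le_mul_of_nonneg_right hfin (le_of_lt (pow_pos hnY 2))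
      rwa [div_mul_cancel₀ _ (pow_pos hnY 2).ne'] at this
    have : rmin * ‖Y‖ ≤ nrm (u₁ - u₂) := by
      have h1 := Real.sqrt_le_sqrt hfin2
      rwa [Real.sqrt_sq (by positivity), Real.sqrt_sq (nrm_nonneg _)] at h1
    rw [hnrmy]
    linarith

end SRGaux3

open SRGaux SRGaux2 SRGaux3 in
theorem srg_separation_non_incremental
    (H₁ H₂ H₁e H₂e : (ℝ → En n) → (ℝ → En n))
    -- `H₁, H₂` are operators on `L²` (preserving `L²` and a.e. equality)
    (hmap₁ : ∀ u, InL2 u → InL2 (H₁ u)) (hmap₂ : ∀ u, InL2 u → InL2 (H₂ u))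
    (hae₁ : ∀ u v, InL2 u → InL2 v → u =ᵐ[mu0] v → H₁ u =ᵐ[mu0] H₁ v)
    (hae₂ : ∀ u v, InL2 u → InL2 v → u =ᵐ[mu0] v → H₂ u =ᵐ[mu0] H₂ v)
    -- (i) `H₁, H₂` are causal and have finite gain with zero offset
    (hc₁ : ∀ T > 0, ∀ u, InL2 u → trunc T (H₁ (trunc T u)) =ᵐ[mu0] trunc T (H₁ u))
    (hc₂ : ∀ T > 0, ∀ u, InL2 u → trunc T (H₂ (trunc T u)) =ᵐ[mu0] trunc T (H₂ u))
    (hg₁ : ∃ γ₁ : ℝ, 0 < γ₁ ∧ ∀ u, InL2 u →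
      eLpNorm (H₁ u) 2 mu0 ≤ ENNReal.ofReal γ₁ * eLpNorm u 2 mu0)
    (hg₂ : ∃ γ₂ : ℝ, 0 < γ₂ ∧ ∀ u, InL2 u →
      eLpNorm (H₂ u) 2 mu0 ≤ ENNReal.ofReal γ₂ * eLpNorm u 2 mu0)
    -- `H₁e, H₂e` are the causal extensions of `H₁, H₂` to the extended space
    (hext₁ : (∀ u, InL2e u → InL2e (H₁e u)) ∧ (∀ u, InL2 u → H₁e u =ᵐ[mu0] H₁ u) ∧
      (∀ T > 0, ∀ u, InL2e u → trunc T (H₁e u) =ᵐ[mu0] trunc T (H₁e (trunc T u))))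
    (hext₂ : (∀ u, InL2e u → InL2e (H₂e u)) ∧ (∀ u, InL2 u → H₂e u =ᵐ[mu0] H₂ u) ∧
      (∀ T > 0, ∀ u, InL2e u → trunc T (H₂e u) =ᵐ[mu0] trunc T (H₂e (trunc T u))))
    -- (ii) `[H₁, τH₂]` is well-posed and causal on the extended space for `τ ∈ (0, 1]`
    (hwp : ∀ τ ∈ Set.Ioc (0 : ℝ) 1, ∀ u, InL2e u → ∃ e y, InL2e e ∧ InL2e y ∧
      e =ᵐ[mu0] u - τ • H₂e y ∧ y =ᵐ[mu0] H₁e e ∧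
      ∀ e' y', InL2e e' → InL2e y' → e' =ᵐ[mu0] u - τ • H₂e y' → y' =ᵐ[mu0] H₁e e' →
        e' =ᵐ[mu0] e ∧ y' =ᵐ[mu0] y)
    (hclcausal : ∀ τ ∈ Set.Ioc (0 : ℝ) 1, ∀ T > 0, ∀ u e y e' y',
      InL2e u → InL2e e → InL2e y →
      e =ᵐ[mu0] u - τ • H₂e y → y =ᵐ[mu0] H₁e e →
      InL2e e' → InL2e y' →
      e' =ᵐ[mu0] trunc T u - τ • H₂e y' → y' =ᵐ[mu0] H₁e e' →
      trunc T y' =ᵐ[mu0] trunc T y)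
    -- (iii) `H₁, H₂` have strictly separated SRGs with margin `r_min > 0`
    (rmin : ℝ) (hrmin : 0 < rmin)
    (hsep : ∀ τ ∈ Set.Ioc (0 : ℝ) 1, ∀ z ∈ srgOp H₁, z ≠ 0 →
      ∀ w ∈ chordClosure (srgOp H₂),
        rmin ≤ ‖z⁻¹ - (-((τ : ℂ) * w))‖) :
    -- conclusion: `[H₁, H₂]` maps all of `L²` to `L²` and has finite incremental gain
    (∀ u, InL2 u → ∃ y, FbMem H₁ H₂ 1 u y) ∧
    (∃ γ' : ℝ, ∀ u₁ y₁ u₂ y₂,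
      FbMem H₁ H₂ 1 u₁ y₁ → FbMem H₁ H₂ 1 u₂ y₂ →
      eLpNorm (y₁ - y₂) 2 mu0 ≤ ENNReal.ofReal γ' * eLpNorm (u₁ - u₂) 2 mu0) := by
  obtain ⟨γ₁, hγ₁pos, hγ₁⟩ := hg₁
  obtain ⟨γ₂, hγ₂pos, hγ₂⟩ := hg₂
  obtain ⟨hext₁map, hext₁ae, hext₁caus⟩ := hext₁
  obtain ⟨hext₂map, hext₂ae, hext₂caus⟩ := hext₂
  have h0L2 : InL2 (0 : ℝ → En n) := MemLp.zero
  -- zero is mapped to zero a.e.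
  have hz1 : H₁ (0 : ℝ → En n) =ᵐ[mu0] 0 := by
    have h := hγ₁ 0 h0L2
    rw [eLpNorm_zero, mul_zero] at h
    exact (eLpNorm_eq_zero_iff (hmap₁ 0 h0L2).aestronglyMeasurable (by norm_num)).1
      (le_antisymm h (by positivity))
  have hz2 : H₂ (0 : ℝ → En n) =ᵐ[mu0] 0 := by
    have h := hγ₂ 0 h0L2
    rw [eLpNorm_zero, mul_zero] at h
    exact (eLpNorm_eq_zero_iff (hmap₂ 0 h0L2).aestronglyMeasurable (by norm_num)).1
      (le_antisymm h (by positivity))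
  -- the non-incremental SRG bound for L² solutions
  have hS : ∀ τ ∈ Set.Ioc (0 : ℝ) 1, ∀ u e y : ℝ → En n, InL2 u → InL2 e → InL2 y →
      e =ᵐ[mu0] u - τ • H₂ y → y =ᵐ[mu0] H₁ e → nrm y * rmin ≤ nrm u := by
    intro τ hτ u e y hu he hy heq hye
    have heq2 : (0 : ℝ → En n) =ᵐ[mu0] (0 : ℝ → En n) - τ • H₂ (0 : ℝ → En n) := by
      filter_upwards [hz2] with t ht
      show (0 : En n) = 0 - τ • (H₂ 0 t)
      rw [show (H₂ 0 t : En n) = 0 from ht]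
      simp
    have hye2 : (0 : ℝ → En n) =ᵐ[mu0] H₁ (0 : ℝ → En n) := hz1.symm
    have h := lemS hmap₂ hae₁ hrmin hsep hτ hu h0L2 he h0L2 hy h0L2 heq hye heq2 hye2
    rwa [sub_zero, sub_zero] at h
  -- truncation gain for the extended H₂
  have hH2trunc : ∀ y : ℝ → En n, InL2e y → ∀ T > 0,
      nrm (trunc T (H₂e y)) ≤ γ₂ * nrm (trunc T y) := by
    intro y hy T hT
    have h1 : trunc T (H₂e y) =ᵐ[mu0] trunc T (H₂ (trunc T y)) :=
      (hext₂caus T hT y hy).trans (trunc_congr T (hext₂ae _ (hy T hT)))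
    calc nrm (trunc T (H₂e y)) = nrm (trunc T (H₂ (trunc T y))) := nrm_congr h1
      _ ≤ nrm (H₂ (trunc T y)) := nrm_trunc_le (hmap₂ _ (hy T hT)) T
      _ ≤ γ₂ * nrm (trunc T y) := nrm_gain γ₂ hγ₂pos.le (hy T hT) (hγ₂ _ (hy T hT))
  -- truncation bound, assuming Q at level τ
  have hU : ∀ τ ∈ Set.Ioc (0 : ℝ) 1,
      (∀ u e y : ℝ → En n, InL2 u → InL2e e → InL2e y → e =ᵐ[mu0] u - τ • H₂e y →
        y =ᵐ[mu0] H₁e e → InL2 y) →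
      ∀ u e y : ℝ → En n, InL2e u → InL2e e → InL2e y →
        e =ᵐ[mu0] u - τ • H₂e y → y =ᵐ[mu0] H₁e e →
        ∀ T > 0, nrm (trunc T y) * rmin ≤ nrm (trunc T u) := by
    intro τ hτ hQ u e y hu he hy heq hye T hT
    obtain ⟨e'', y'', he'', hy'', heq'', hye'', -⟩ :=
      hwp τ hτ (trunc T u) (inL2e_of_inL2 (hu T hT))
    have htr : trunc T y'' =ᵐ[mu0] trunc T y :=
      hclcausal τ hτ T hT u e y e'' y'' hu he hy heq hye he'' hy'' heq'' hye''
    have hy''2 : InL2 y'' := hQ (trunc T u) e'' y'' (hu T hT) he'' hy'' heq'' hye''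
    have hH2ae : H₂e y'' =ᵐ[mu0] H₂ y'' := hext₂ae y'' hy''2
    have heqH : e'' =ᵐ[mu0] trunc T u - τ • H₂ y'' := by
      filter_upwards [heq'', hH2ae] with t h1 h2
      show e'' t = trunc T u t - τ • (H₂ y'' t)
      rw [show e'' t = trunc T u t - τ • (H₂e y'' t) from h1, h2]
    have he''2 : InL2 e'' :=
      (memLp_congr_ae heqH).2 ((hu T hT).sub ((hmap₂ y'' hy''2).const_smul τ))
    have hyeH : y'' =ᵐ[mu0] H₁ e'' := hye''.trans (hext₁ae e'' he''2)
    have hb := hS τ hτ (trunc T u) e'' y'' (hu T hT) he''2 hy''2 heqH hyeH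
    calc nrm (trunc T y) * rmin = nrm (trunc T y'') * rmin := by rw [nrm_congr htr.symm]
      _ ≤ nrm y'' * rmin := mul_le_mul_of_nonneg_right (nrm_trunc_le hy''2 T) hrmin.le
      _ ≤ nrm (trunc T u) := hb
  -- base case: small gain
  have hBase : ∀ τ ∈ Set.Ioc (0 : ℝ) 1, τ * (γ₁ * γ₂) ≤ 1 / 2 →
      ∀ u e y : ℝ → En n, InL2 u → InL2e e → InL2e y → e =ᵐ[mu0] u - τ • H₂e y →
        y =ᵐ[mu0] H₁e e → InL2 y := by
    intro τ hτ hsmall u e y hu he hy heq hye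
    have hbt : ∀ T > 0, nrm (trunc T y) ≤ 2 * γ₁ * nrm u := by
      intro T hT
      have hy1 : trunc T y =ᵐ[mu0] trunc T (H₁ (trunc T e)) :=
        (trunc_congr T hye).trans
          ((hext₁caus T hT e he).trans (trunc_congr T (hext₁ae _ (he T hT))))
      have hb1 : nrm (trunc T y) ≤ γ₁ * nrm (trunc T e) := by
        rw [nrm_congr hy1]
        calc nrm (trunc T (H₁ (trunc T e))) ≤ nrm (H₁ (trunc T e)) :=
            nrm_trunc_le (hmap₁ _ (he T hT)) T
          _ ≤ γ₁ * nrm (trunc T e) := nrm_gain γ₁ hγ₁pos.le (he T hT) (hγ₁ _ (he T hT))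
      have he1 : trunc T e =ᵐ[mu0] trunc T u - τ • trunc T (H₂e y) := by
        have h := trunc_congr T heq
        rwa [trunc_sub, trunc_smul] at h
      have hb2 : nrm (trunc T e) ≤ nrm u + τ * (γ₂ * nrm (trunc T y)) := by
        rw [nrm_congr he1]
        calc nrm (trunc T u - τ • trunc T (H₂e y))
            ≤ nrm (trunc T u) + nrm (τ • trunc T (H₂e y)) :=
              nrm_sub_le (inL2_trunc hu T) ((hext₂map y hy T hT).const_smul τ)
          _ ≤ nrm u + τ * (γ₂ * nrm (trunc T y)) := by
              have h1 := nrm_trunc_le hu T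
              have h2 : nrm (τ • trunc T (H₂e y)) = τ * nrm (trunc T (H₂e y)) := by
                rw [nrm_smul τ (hext₂map y hy T hT), abs_of_pos hτ.1]
              have h3 := hH2trunc y hy T hT
              rw [h2]
              have := mul_le_mul_of_nonneg_left h3 hτ.1.le
              linarith
      have hb3 : nrm (trunc T y) ≤ γ₁ * nrm u + τ * (γ₁ * γ₂) * nrm (trunc T y) := by
        nlinarith [hb1, hb2, hγ₁pos.le]
      have hc : τ * (γ₁ * γ₂) * nrm (trunc T y) ≤ (1 / 2) * nrm (trunc T y) :=
        mul_le_mul_of_nonneg_right hsmall (nrm_nonneg _)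
      linarith
    exact inL2_of_nrm_trunc_le hy (2 * γ₁ * nrm u) (fun k => hbt ((k : ℝ) + 1) (by positivity))
  -- induction step
  have hStep : ∀ τ ∈ Set.Ioc (0 : ℝ) 1,
      (∀ u e y : ℝ → En n, InL2 u → InL2e e → InL2e y → e =ᵐ[mu0] u - τ • H₂e y →
        y =ᵐ[mu0] H₁e e → InL2 y) →
      ∀ τ' ∈ Set.Ioc (0 : ℝ) 1, τ < τ' → τ' - τ ≤ rmin / (2 * γ₂) →
      ∀ u e y : ℝ → En n, InL2 u → InL2e e → InL2e y → e =ᵐ[mu0] u - τ' • H₂e y →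
        y =ᵐ[mu0] H₁e e → InL2 y := by
    intro τ hτ hQ τ' hτ' hlt hdiff u e y hu he hy heq hye
    have hH2eL2e : InL2e (H₂e y) := hext₂map y hy
    have hu' : InL2e (u - (τ' - τ) • H₂e y) :=
      InL2e.sub (inL2e_of_inL2 hu) (InL2e.smul hH2eL2e _)
    have heq' : e =ᵐ[mu0] (u - (τ' - τ) • H₂e y) - τ • H₂e y := by
      filter_upwards [heq] with t ht
      show e t = (u t - (τ' - τ) • (H₂e y) t) - τ • (H₂e y) t
      rw [show e t = u t - τ' • (H₂e y) t from ht, sub_smul]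
      abel
    have hbt := hU τ hτ hQ (u - (τ' - τ) • H₂e y) e y hu' he hy heq' hye
    have hbt2 : ∀ T > 0, nrm (trunc T y) * rmin ≤ nrm u + (τ' - τ) * (γ₂ * nrm (trunc T y)) := by
      intro T hT
      have h1 := hbt T hT
      have h2 : trunc T (u - (τ' - τ) • H₂e y)
          = trunc T u - (τ' - τ) • trunc T (H₂e y) := by
        rw [trunc_sub, trunc_smul]
      have h3 : nrm (trunc T (u - (τ' - τ) • H₂e y))
          ≤ nrm u + (τ' - τ) * (γ₂ * nrm (trunc T y)) := by
        rw [h2]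
        calc nrm (trunc T u - (τ' - τ) • trunc T (H₂e y))
            ≤ nrm (trunc T u) + nrm ((τ' - τ) • trunc T (H₂e y)) :=
              nrm_sub_le (inL2_trunc hu T) ((hH2eL2e T hT).const_smul _)
          _ ≤ nrm u + (τ' - τ) * (γ₂ * nrm (trunc T y)) := by
              have ha1 := nrm_trunc_le hu T
              have ha2 : nrm ((τ' - τ) • trunc T (H₂e y))
                  = (τ' - τ) * nrm (trunc T (H₂e y)) := by
                rw [nrm_smul _ (hH2eL2e T hT), abs_of_pos (by linarith)]
              have ha3 := hH2trunc y hy T hT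
              rw [ha2]
              have := mul_le_mul_of_nonneg_left ha3 (by linarith : (0:ℝ) ≤ τ' - τ)
              linarith
      linarith
    have hbound : ∀ T > 0, nrm (trunc T y) ≤ 2 * nrm u / rmin := by
      intro T hT
      have h1 := hbt2 T hT
      have hX0 := nrm_nonneg (trunc T y)
      have hd : (τ' - τ) * γ₂ ≤ rmin / 2 := by
        calc (τ' - τ) * γ₂ ≤ (rmin / (2 * γ₂)) * γ₂ :=
            mul_le_mul_of_nonneg_right hdiff hγ₂pos.le
          _ = rmin / 2 := by field_simp
      rw [le_div_iff₀ hrmin]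
      nlinarith [mul_le_mul_of_nonneg_right hd hX0]
    exact inL2_of_nrm_trunc_le hy _ (fun k => hbound ((k : ℝ) + 1) (by positivity))
  -- homotopy induction to τ = 1
  have hQ1 : ∀ u e y : ℝ → En n, InL2 u → InL2e e → InL2e y →
      e =ᵐ[mu0] u - (1 : ℝ) • H₂e y → y =ᵐ[mu0] H₁e e → InL2 y := by
    have hτ₀pos : (0:ℝ) < min 1 (1 / (2 * (γ₁ * γ₂))) := lt_min one_pos (by positivity)
    have hδpos : (0:ℝ) < rmin / (2 * γ₂) := by positivity
    set τ₀ := min 1 (1 / (2 * (γ₁ * γ₂))) with hτ₀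
    set δ := rmin / (2 * γ₂) with hδ
    have hInd : ∀ k : ℕ, ∀ τ ∈ Set.Ioc (0 : ℝ) 1, τ ≤ τ₀ + k * δ →
        ∀ u e y : ℝ → En n, InL2 u → InL2e e → InL2e y → e =ᵐ[mu0] u - τ • H₂e y →
          y =ᵐ[mu0] H₁e e → InL2 y := by
      intro k
      induction k with
      | zero =>
        intro τ hτ hle
        apply hBase τ hτ
        have hle' : τ ≤ 1 / (2 * (γ₁ * γ₂)) := by
          have : τ ≤ τ₀ := by simpa using hle
          exact this.trans (min_le_right _ _)
        calc τ * (γ₁ * γ₂) ≤ (1 / (2 * (γ₁ * γ₂))) * (γ₁ * γ₂) :=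
            mul_le_mul_of_nonneg_right hle' (by positivity)
          _ = 1 / 2 := by field_simp
      | succ k ih =>
        intro τ hτ hle
        by_cases hcase : τ ≤ τ₀ + k * δ
        · exact ih τ hτ hcase
        · push_neg at hcase
          have hpos'' : (0:ℝ) < τ₀ + k * δ :=
            lt_of_lt_of_le hτ₀pos (le_add_of_nonneg_right (by positivity))
          have hτ'' : τ₀ + k * δ ∈ Set.Ioc (0 : ℝ) 1 := ⟨hpos'', le_trans hcase.le hτ.2⟩
          have hQ'' := ih (τ₀ + k * δ) hτ'' (le_refl _)
          refine hStep (τ₀ + k * δ) hτ'' hQ'' τ hτ hcase ?_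
          have : τ ≤ τ₀ + (k + 1 : ℕ) * δ := hle
          push_cast at this
          linarith
    obtain ⟨k, hk⟩ := exists_nat_ge ((1 - τ₀) / δ)
    have hfinal : (1:ℝ) ≤ τ₀ + k * δ := by
      have := (div_le_iff₀ hδpos).1 hk
      linarith
    exact hInd k 1 ⟨one_pos, le_refl 1⟩ hfinal
  constructor
  · intro u hu
    obtain ⟨e, y, he, hy, heq, hye, -⟩ := hwp 1 ⟨one_pos, le_refl 1⟩ u (inL2e_of_inL2 hu)
    have hy2 : InL2 y := hQ1 u e y hu he hy heq hye
    have hH2ae := hext₂ae y hy2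
    have heqH : e =ᵐ[mu0] u - (1 : ℝ) • H₂ y := by
      filter_upwards [heq, hH2ae] with t h1 h2
      show e t = u t - (1 : ℝ) • (H₂ y t)
      rw [show e t = u t - (1:ℝ) • (H₂e y t) from h1, h2]
    have he2 : InL2 e := (memLp_congr_ae heqH).2 (hu.sub ((hmap₂ y hy2).const_smul 1))
    have hyeH : y =ᵐ[mu0] H₁ e := hye.trans (hext₁ae e he2)
    exact ⟨y, hu, hy2, e, he2, heqH, hyeH, fun e' _ heq' _ => heq'.trans heqH.symm⟩
  · refine ⟨1 / rmin, ?_⟩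
    rintro u₁ y₁ u₂ y₂ ⟨hu₁, hy₁, e₁, he₁, heq₁, hye₁, -⟩ ⟨hu₂, hy₂, e₂, he₂, heq₂, hye₂, -⟩
    have hb := lemS hmap₂ hae₁ hrmin hsep (⟨one_pos, le_refl 1⟩ : (1:ℝ) ∈ Set.Ioc (0:ℝ) 1)
      hu₁ hu₂ he₁ he₂ hy₁ hy₂ heq₁ hye₁ heq₂ hye₂
    have hy12 : InL2 (y₁ - y₂) := hy₁.sub hy₂
    have hu12 : InL2 (u₁ - u₂) := hu₁.sub hu₂
    rw [show eLpNorm (y₁ - y₂) 2 mu0 = ENNReal.ofReal (nrm (y₁ - y₂)) from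
      (ENNReal.ofReal_toReal hy12.2.ne).symm]
    rw [show eLpNorm (u₁ - u₂) 2 mu0 = ENNReal.ofReal (nrm (u₁ - u₂)) from
      (ENNReal.ofReal_toReal hu12.2.ne).symm]
    rw [← ENNReal.ofReal_mul (by positivity : (0:ℝ) ≤ 1 / rmin)]
    apply ENNReal.ofReal_le_ofReal
    rw [one_div, ← div_eq_inv_mul]
    exact (le_div_iff₀ hrmin).2 hb

end
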